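/- arXiv:2008.03846 — 3 statements merged into one kernel-verified Lean document; each statement's English description precedes it below -/
import Mathlib

section
/- If a nonzero real polynomial has at most 3 nonzero terms (monomials), then it has at most 2 positive real roots counted with multiplicity. -/
open Polynomial

namespace DescartesAux

/-- Positive roots of `p`, with multiplicity. -/
noncomputable def proots (p : ℝ[X]) : Multiset ℝ :=
  p.roots.filter (fun z => 0 < z)

lemma sum_count_le (s : Finset ℝ) (m : Multiset ℝ) :
    ∑ x ∈ s, m.count x ≤ Multiset.card m := by
  classical
  calc ∑ x ∈ s, m.count x ≤ ∑ x ∈ s ∪ m.toFinset, m.count x :=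
        Finset.sum_le_sum_of_subset Finset.subset_union_left
    _ = ∑ x ∈ m.toFinset, m.count x := by
        refine (Finset.sum_subset Finset.subset_union_right ?_).symm
        intro x _ hx
        exact Multiset.count_eq_zero.2 fun h => hx (Multiset.mem_toFinset.2 h)
    _ = Multiset.card m := Multiset.toFinset_sum_count_eq m

/-- Rolle-type interleaving for distinct positive roots. -/
lemma card_toFinset_le (p : ℝ[X]) :
    (proots p).toFinset.card ≤
      ((proots (derivative p)).toFinset \ (proots p).toFinset).card + 1 := by
  classical
  rcases eq_or_ne (derivative p) 0 with hp' | hp'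
  · rw [eq_C_of_derivative_eq_zero hp']
    simp [proots, roots_C]
  have hp : p ≠ 0 := ne_of_apply_ne derivative (by rwa [derivative_zero])
  refine Finset.card_le_diff_of_interleaved fun x hx y hy hxy _ => ?_
  rw [Multiset.mem_toFinset, proots, Multiset.mem_filter, mem_roots hp] at hx hy
  obtain ⟨z, hz1, hz2⟩ := exists_deriv_eq_zero hxy p.continuousOn (hx.1.trans hy.1.symm)
  refine ⟨z, ?_, hz1⟩
  rw [Multiset.mem_toFinset, proots, Multiset.mem_filter, mem_roots hp']
  exact ⟨by rw [IsRoot, ← p.deriv]; exact hz2, hx.2.trans hz1.1⟩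

/-- Rolle with multiplicity for positive roots. -/
lemma card_proots_le_derivative (p : ℝ[X]) :
    Multiset.card (proots p) ≤ Multiset.card (proots (derivative p)) + 1 := by
  classical
  set q := derivative p with hq
  set S := (proots p).toFinset with hS
  set T := (proots q).toFinset with hT
  have hpos : ∀ x ∈ S, 0 < x := by
    intro x hx
    rw [hS, Multiset.mem_toFinset, proots, Multiset.mem_filter] at hx
    exact hx.2
  have key : ∀ x ∈ S, (proots p).count x ≤ (proots q).count x + 1 := by
    intro x hx
    have hx0 := hpos x hx
    rw [proots, Multiset.count_filter_of_pos hx0, count_roots,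
      proots, Multiset.count_filter_of_pos hx0, count_roots]
    exact tsub_le_iff_right.mp (p.rootMultiplicity_sub_one_le_derivative_rootMultiplicity x)
  calc Multiset.card (proots p) = ∑ x ∈ S, (proots p).count x :=
        (Multiset.toFinset_sum_count_eq _).symm
    _ ≤ ∑ x ∈ S, ((proots q).count x + 1) := Finset.sum_le_sum key
    _ = ∑ x ∈ S, (proots q).count x + S.card := by
        rw [Finset.sum_add_distrib, Finset.card_eq_sum_ones]
    _ ≤ ∑ x ∈ S, (proots q).count x + ((T \ S).card + 1) :=
        add_le_add_right (card_toFinset_le p) _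
    _ ≤ ∑ x ∈ S, (proots q).count x + (∑ x ∈ T \ S, (proots q).count x + 1) := by
        refine add_le_add_right (add_le_add_left ?_ 1) _
        rw [Finset.card_eq_sum_ones]
        refine Finset.sum_le_sum fun x hx => ?_
        have : x ∈ proots q := Multiset.mem_toFinset.1 (Finset.mem_sdiff.1 hx).1
        exact Nat.one_le_iff_ne_zero.2 (Multiset.count_ne_zero.2 this)
    _ = ∑ x ∈ S ∪ (T \ S), (proots q).count x + 1 := by
        rw [Finset.sum_union Finset.disjoint_sdiff]
        omega
    _ ≤ Multiset.card (proots q) + 1 := add_le_add_left (sum_count_le _ _) 1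

lemma card_support_divX_le (p : ℝ[X]) : (divX p).support.card ≤ p.support.card := by
  refine Finset.card_le_card_of_injOn (· + 1) ?_ ?_
  · intro i hi
    rw [Finset.mem_coe, mem_support_iff, coeff_divX] at hi
    simpa [mem_support_iff] using hi
  · intro a _ b _ h
    simpa using h

lemma proots_X_mul (p : ℝ[X]) (hp : p ≠ 0) : proots (X * p) = proots p := by
  have hX : (X : ℝ[X]) ≠ 0 := X_ne_zero
  rw [proots, roots_mul (mul_ne_zero hX hp), roots_X, Multiset.filter_add, proots]
  rw [Multiset.filter_singleton]
  simp

/-- Strip trailing zeros: any nonzero polynomial has the same positive roots as one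
with nonzero constant coefficient and no larger support. -/
lemma exists_factor_aux (N : ℕ) : ∀ p : ℝ[X], p.natDegree ≤ N → p ≠ 0 →
    ∃ q : ℝ[X], q ≠ 0 ∧ q.coeff 0 ≠ 0 ∧ q.support.card ≤ p.support.card ∧
      proots p = proots q := by
  induction N with
  | zero =>
    intro p hN hp
    refine ⟨p, hp, ?_, le_rfl, rfl⟩
    intro h0
    have := p.eq_C_of_natDegree_eq_zero (Nat.le_zero.mp hN)
    rw [h0, C_0] at this
    exact hp this
  | succ N ihd =>
    intro p hN hp
    by_cases h0 : p.coeff 0 = 0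
    · have hXp : X * p.divX = p := by
        have := p.X_mul_divX_add
        rwa [h0, C_0, add_zero] at this
      have hne : p.divX ≠ 0 := by
        intro h
        rw [h, mul_zero] at hXp
        exact hp hXp.symm
      have hdeg0 : p.natDegree ≠ 0 := by
        intro h
        have := p.eq_C_of_natDegree_eq_zero h
        rw [h0, C_0] at this
        exact hp this
      have hlt : p.divX.natDegree ≤ N := by
        rw [natDegree_divX_eq_natDegree_tsub_one]
        omega
      obtain ⟨q, hq1, hq2, hq3, hq4⟩ := ihd p.divX hlt hne
      refine ⟨q, hq1, hq2, hq3.trans (card_support_divX_le p), ?_⟩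
      rw [← hXp, proots_X_mul _ hne, hq4]
    · exact ⟨p, hp, h0, le_rfl, rfl⟩

lemma exists_factor (p : ℝ[X]) (hp : p ≠ 0) :
    ∃ q : ℝ[X], q ≠ 0 ∧ q.coeff 0 ≠ 0 ∧ q.support.card ≤ p.support.card ∧
      proots p = proots q :=
  exists_factor_aux p.natDegree p le_rfl hp

lemma card_support_derivative_lt (p : ℝ[X]) (h0 : p.coeff 0 ≠ 0) :
    (derivative p).support.card + 1 ≤ p.support.card := by
  have h1 : (derivative p).support.card ≤ (p.support.erase 0).card := by
    refine Finset.card_le_card_of_injOn (· + 1) ?_ ?_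
    · intro i hi
      rw [Finset.mem_coe, mem_support_iff, coeff_derivative] at hi
      have h2 : p.coeff (i + 1) ≠ 0 := fun h => hi (by simp [h])
      simp [Finset.mem_erase, mem_support_iff, h2]
    · intro a _ b _ h
      simpa using h
  have h2 : 0 ∈ p.support := mem_support_iff.2 h0
  have h3 : (p.support.erase 0).card + 1 = p.support.card := Finset.card_erase_add_one h2
  omega

/-- Key bound: a nonzero polynomial with at most `n + 1` terms has at most `n`
positive roots counted with multiplicity. -/
lemma main : ∀ n : ℕ, ∀ p : ℝ[X], p ≠ 0 → p.support.card ≤ n + 1 →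
    Multiset.card (proots p) ≤ n := by
  intro n
  induction n with
  | zero =>
    intro p hp hs
    have h1 : p.support.card = 1 := le_antisymm hs (Finset.card_pos.2
      (Polynomial.nonempty_support_iff.2 hp))
    obtain ⟨k, x, hx, rfl⟩ := Polynomial.card_support_eq_one.1 h1
    have : proots (C x * X ^ k) = 0 := by
      rw [proots, Multiset.filter_eq_nil]
      intro z hz
      have hz' : (C x * X ^ k).IsRoot z := (mem_roots'.1 hz).2
      rw [IsRoot, eval_mul, eval_C, eval_pow, eval_X] at hz'
      have : z ^ k = 0 := by
        rcases mul_eq_zero.1 hz' with h | h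
        · exact absurd h hx
        · exact h
      have hz0 : z = 0 := (pow_eq_zero_iff'.mp this).1
      simp [hz0]
    rw [this]
    simp
  | succ n ih =>
    intro p hp hs
    obtain ⟨q, hq1, hq2, hq3, hq4⟩ := exists_factor p hp
    rw [hq4]
    refine (card_proots_le_derivative q).trans ?_
    rcases eq_or_ne (derivative q) 0 with h | h
    · rw [h]
      simp [proots]
    · have hcard : (derivative q).support.card ≤ n + 1 := by
        have := card_support_derivative_lt q hq2
        omega
      exact add_le_add_left (ih _ h hcard) 1

end DescartesAux

/-- A nonzero real polynomial with at most 3 nonzero terms has at most 2 positive real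
roots counted with multiplicity. -/
theorem stmt_3 (g : Polynomial ℝ) (hg : g ≠ 0) (hsupp : g.support.card ≤ 3) :
    Multiset.card (g.roots.filter fun z => 0 < z) ≤ 2 :=
  DescartesAux.main 2 g hg hsupp
end

section
/- A power function and an affine function intersect in at most two points in the open first quadrant: if ℓ₁(x) = δ x^{-ξ} with δ > 0 and ξ : ℝ, and ℓ₂(x) = A x - B with A, B : ℝ, then the set {x > 0 : ℓ₁(x) = ℓ₂(x) and ℓ₂(x) > 0} has at most 2 elements, provided ξ ∉ {0, -1} or the functions are not identical. -/
open Set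

private lemma deriv2_rpow_aux (p : ℝ) {x : ℝ} (hx : 0 < x) :
    deriv^[2] (fun y : ℝ => y ^ p) x = p * ((p - 1) * x ^ (p - 2)) := by
  have h1 : deriv (fun y : ℝ => y ^ p) =ᶠ[nhds x] fun y => p * y ^ (p - 1) := by
    filter_upwards [Ioi_mem_nhds hx] with y hy
    exact Real.deriv_rpow_const y p
  have h2 : deriv (fun y : ℝ => p * y ^ (p - 1)) x = p * ((p - 1) * x ^ (p - 1 - 1)) :=
    (((Real.hasDerivAt_rpow_const (p := p - 1) (Or.inl hx.ne')).const_mul p)).deriv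
  calc deriv^[2] (fun y : ℝ => y ^ p) x
      = deriv (deriv (fun y : ℝ => y ^ p)) x := by simp [Function.iterate_succ]
    _ = deriv (fun y => p * y ^ (p - 1)) x := h1.deriv_eq
    _ = p * ((p - 1) * x ^ (p - 2)) := by rw [h2]; ring_nf

private lemma rpow_strict (p : ℝ) (hp0 : p ≠ 0) (hp1 : p ≠ 1) :
    StrictConvexOn ℝ (Ioi (0:ℝ)) (fun y : ℝ => y ^ p) ∨
      StrictConcaveOn ℝ (Ioi (0:ℝ)) (fun y : ℝ => y ^ p) := by
  have hcont : ContinuousOn (fun y : ℝ => y ^ p) (Ioi 0) := by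
    intro y hy
    exact (Real.continuousAt_rpow_const y p (Or.inl (ne_of_gt hy))).continuousWithinAt
  rcases lt_trichotomy (p * (p - 1)) 0 with h | h | h
  · right
    refine strictConcaveOn_of_deriv2_neg (convex_Ioi 0) hcont (fun x hx => ?_)
    rw [interior_Ioi] at hx
    rw [deriv2_rpow_aux p hx]
    have : (0:ℝ) < x ^ (p - 2) := Real.rpow_pos_of_pos hx _
    nlinarith
  · exfalso
    rcases mul_eq_zero.1 h with h' | h'
    · exact hp0 h'
    · exact hp1 (by linarith)
  · left
    refine strictConvexOn_of_deriv2_pos (convex_Ioi 0) hcont (fun x hx => ?_)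
    rw [interior_Ioi] at hx
    rw [deriv2_rpow_aux p hx]
    have : (0:ℝ) < x ^ (p - 2) := Real.rpow_pos_of_pos hx _
    nlinarith

private lemma no_three (δ A B p : ℝ) (hδ : 0 < δ) (hp0 : p ≠ 0) (hp1 : p ≠ 1)
    {x y z : ℝ} (hx : 0 < x) (hy : 0 < y) (hz : 0 < z)
    (hex : δ * x ^ p = A * x - B) (hey : δ * y ^ p = A * y - B)
    (hez : δ * z ^ p = A * z - B) (hxy : x < y) (hyz : y < z) : False := by
  set a : ℝ := (z - y) / (z - x) with ha_def
  set b : ℝ := (y - x) / (z - x) with hb_def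
  have hzx : 0 < z - x := by linarith
  have ha : 0 < a := div_pos (by linarith) hzx
  have hb : 0 < b := div_pos (by linarith) hzx
  have hab : a + b = 1 := by
    rw [ha_def, hb_def, ← add_div, div_eq_one_iff_eq hzx.ne']; ring
  have hcomb : a * x + b * z = y := by
    rw [ha_def, hb_def, div_mul_eq_mul_div, div_mul_eq_mul_div, ← add_div,
      div_eq_iff hzx.ne']; ring
  have heq : a * (A * x - B) + b * (A * z - B) = A * y - B := by
    linear_combination A * hcomb - B * hab
  rcases rpow_strict p hp0 hp1 with hconv | hconc
  · have := hconv.2 (mem_Ioi.2 hx) (mem_Ioi.2 hz) (ne_of_lt (by linarith)) ha hb hab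
    simp only [smul_eq_mul, hcomb] at this
    have h2 : δ * y ^ p < a * (δ * x ^ p) + b * (δ * z ^ p) := by nlinarith
    rw [hex, hey, hez] at h2
    linarith
  · have := hconc.2 (mem_Ioi.2 hx) (mem_Ioi.2 hz) (ne_of_lt (by linarith)) ha hb hab
    simp only [smul_eq_mul, hcomb] at this
    have h2 : a * (δ * x ^ p) + b * (δ * z ^ p) < δ * y ^ p := by nlinarith
    rw [hex, hey, hez] at h2
    linarith

/-- A power function `ℓ₁(x) = δ x^(-ξ)` (with `δ > 0`) and an affine function
`ℓ₂(x) = A x - B`, not identical on `(0, ∞)`, intersect in at most two points of the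
open first quadrant. -/
theorem stmt_7 (δ ξ A B : ℝ) (hδ : 0 < δ)
    (hne : ¬ ∀ x : ℝ, 0 < x → δ * x ^ (-ξ) = A * x - B) :
    ({x : ℝ | 0 < x ∧ δ * x ^ (-ξ) = A * x - B ∧ 0 < A * x - B}).Finite ∧
    ({x : ℝ | 0 < x ∧ δ * x ^ (-ξ) = A * x - B ∧ 0 < A * x - B}).ncard ≤ 2 := by
  set S := {x : ℝ | 0 < x ∧ δ * x ^ (-ξ) = A * x - B ∧ 0 < A * x - B} with hS
  by_cases hp0 : -ξ = 0
  · -- ξ = 0 : equation is δ = A x - B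
    have hsub : S.Subsingleton := by
      intro u hu v hv
      obtain ⟨hu0, hue, -⟩ := hu
      obtain ⟨hv0, hve, -⟩ := hv
      rw [hp0, Real.rpow_zero, mul_one] at hue hve
      by_cases hA : A = 0
      · exfalso
        apply hne
        intro w hw
        rw [hp0, Real.rpow_zero, mul_one, hA]
        rw [hA] at hue
        linarith
      · have : A * u = A * v := by linarith
        exact mul_left_cancel₀ hA this
    exact ⟨hsub.finite, le_trans ((Set.ncard_le_one hsub.finite).2 (fun u hu v hv => hsub hu hv) ) one_le_two⟩
  · by_cases hp1 : -ξ = 1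
    · -- ξ = -1 : equation is δ x = A x - B
      have hsub : S.Subsingleton := by
        intro u hu v hv
        obtain ⟨hu0, hue, -⟩ := hu
        obtain ⟨hv0, hve, -⟩ := hv
        rw [hp1, Real.rpow_one] at hue hve
        by_cases hA : A = δ
        · exfalso
          apply hne
          intro w hw
          rw [hp1, Real.rpow_one, hA]
          have hB : B = 0 := by nlinarith
          rw [hB]; ring
        · have h1 : (A - δ) * u = B := by nlinarith
          have h2 : (A - δ) * v = B := by nlinarith
          have : (A - δ) * u = (A - δ) * v := by linarith
          exact mul_left_cancel₀ (sub_ne_zero.2 hA) this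
      exact ⟨hsub.finite, le_trans ((Set.ncard_le_one hsub.finite).2 (fun u hu v hv => hsub hu hv)) one_le_two⟩
    · -- nonlinear case: no three distinct points
      have key : ∀ u ∈ S, ∀ v ∈ S, ∀ w ∈ S, u ≠ v → u ≠ w → v ≠ w → False := by
        intro u hu v hv w hw huv huw hvw
        obtain ⟨hu0, hue, -⟩ := hu
        obtain ⟨hv0, hve, -⟩ := hv
        obtain ⟨hw0, hwe, -⟩ := hw
        have nt : ∀ x y z : ℝ, 0 < x → 0 < y → 0 < z →
            δ * x ^ (-ξ) = A * x - B → δ * y ^ (-ξ) = A * y - B → δ * z ^ (-ξ) = A * z - B →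
            x < y → y < z → False := fun x y z h1 h2 h3 h4 h5 h6 h7 h8 =>
          no_three δ A B (-ξ) hδ hp0 hp1 h1 h2 h3 h4 h5 h6 h7 h8
        rcases lt_trichotomy u v with h1 | h1 | h1
        · rcases lt_trichotomy v w with h2 | h2 | h2
          · exact nt u v w hu0 hv0 hw0 hue hve hwe h1 h2
          · exact hvw h2
          · rcases lt_trichotomy u w with h3 | h3 | h3
            · exact nt u w v hu0 hw0 hv0 hue hwe hve h3 h2
            · exact huw h3
            · exact nt w u v hw0 hu0 hv0 hwe hue hve h3 h1
        · exact huv h1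
        · rcases lt_trichotomy u w with h2 | h2 | h2
          · exact nt v u w hv0 hu0 hw0 hve hue hwe h1 h2
          · exact huw h2
          · rcases lt_trichotomy v w with h3 | h3 | h3
            · exact nt v w u hv0 hw0 hu0 hve hwe hue h3 h2
            · exact hvw h3
            · exact nt w v u hw0 hv0 hu0 hwe hve hue h3 h1
      by_cases hemp : S = ∅
      · rw [hemp]; simp
      · obtain ⟨a, ha⟩ := Set.nonempty_iff_ne_empty.2 hemp
        by_cases hone : S ⊆ {a}
        · have hsub : S.Subsingleton := fun u hu v hv => by
            rw [hone hu, hone hv]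
          exact ⟨hsub.finite, le_trans ((Set.ncard_le_one hsub.finite).2 (fun u hu v hv => hsub hu hv)) one_le_two⟩
        · obtain ⟨b, hb, hba⟩ := Set.not_subset.1 (by intro h; exact hone h)
          have hsub2 : S ⊆ {a, b} := by
            intro c hc
            by_contra hcn
            simp only [mem_insert_iff, mem_singleton_iff, not_or] at hcn
            simp only [mem_singleton_iff] at hba
            exact key a ha b hb c hc (Ne.symm hba) (fun h => hcn.1 h.symm) (fun h => hcn.2 h.symm)
          refine ⟨Set.Finite.subset ((Set.finite_singleton b).insert a) hsub2, ?_⟩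
          calc S.ncard ≤ ({a, b} : Set ℝ).ncard :=
                Set.ncard_le_ncard hsub2 ((Set.finite_singleton b).insert a)
            _ ≤ 2 := le_trans (Set.ncard_insert_le a {b}) (by simp)
end

section
/- Let g(x) = -(κ₁ - λκ₃)x³ - 2c₁κ₁ x² - (c₁²κ₁ - κ₂)x + c₁κ₂ with κ₁, κ₂, κ₃ > 0, λ > 0 and c₁ : ℝ. Then the coefficient sequence of g has at most 2 sign changes; consequently g has at most 2 positive real roots counted with multiplicity. -/
open Polynomial

/-- The list of coefficients `a_0, ..., a_n` of a polynomial (up to its degree). -/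
noncomputable def coeffList (g : Polynomial ℝ) : List ℝ :=
  (List.range (g.natDegree + 1)).map fun i => g.coeff i

/-- The number of sign changes in the sequence of nonzero coefficients of `g`. -/
noncomputable def signChanges (g : Polynomial ℝ) : ℕ :=
  let l := (_root_.coeffList g).filter fun a => a ≠ 0
  (l.zip l.tail).countP fun p => p.1 * p.2 < 0

/-- The number of sign changes is at most the degree. -/
lemma signChanges_le_natDegree (g : Polynomial ℝ) : signChanges g ≤ g.natDegree := by
  unfold signChanges
  have h1 : ((_root_.coeffList g).filter fun a => a ≠ 0).length ≤ g.natDegree + 1 := by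
    refine le_trans (List.length_filter_le _ _) ?_
    simp [_root_.coeffList]
  refine le_trans (List.countP_le_length) ?_
  simp only [List.length_zip, List.length_tail]
  omega

/-- Sign-change count bound for a 4-element coefficient list where the entries in
positions 0 and 2 have opposite signs. -/
lemma four_case (d c b a : ℝ) (hdb : d * b < 0) :
    (([d, c, b, a].filter fun x => x ≠ 0).zip ([d, c, b, a].filter fun x => x ≠ 0).tail).countP
      (fun p => p.1 * p.2 < 0) ≤ 2 := by
  have hd : d ≠ 0 := fun h => by simp [h] at hdb
  have hb : b ≠ 0 := fun h => by simp [h] at hdb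
  by_cases hc : c = 0
  · simp only [List.filter, hd, hb, hc, decide_not]
    by_cases h1 : a = 0 <;>
      simp [h1, List.countP_cons] <;> split_ifs <;> omega
  · by_cases h1 : a = 0
    · simp only [List.filter, hd, hb, hc, h1, decide_not]
      simp
      exact le_trans (List.countP_le_length) (by simp)
    · simp only [List.filter, hd, hb, hc, h1, decide_not]
      by_cases p1 : d * c < 0 <;> by_cases p2 : c * b < 0 <;> by_cases p3 : b * a < 0 <;>
        simp [List.countP_cons, p1, p2, p3, List.zip] <;> nlinarith [sq_nonneg c]

/-- The cubic `g(x) = -(κ₁ - λκ₃)x³ - 2c₁κ₁ x² - (c₁²κ₁ - κ₂)x + c₁κ₂` with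
`κ₁, κ₂, κ₃, λ > 0` has at most 2 sign changes in its coefficient sequence, hence at most
2 positive real roots counted with multiplicity. -/
theorem stmt_10 (κ₁ κ₂ κ₃ lam c₁ : ℝ) (hκ₁ : 0 < κ₁) (hκ₂ : 0 < κ₂) (hκ₃ : 0 < κ₃)
    (hlam : 0 < lam)
    (g : Polynomial ℝ)
    (hg : g = C (-(κ₁ - lam * κ₃)) * X ^ 3 + C (-(2 * c₁ * κ₁)) * X ^ 2
        + C (-(c₁ ^ 2 * κ₁ - κ₂)) * X + C (c₁ * κ₂)) :
    signChanges g ≤ 2 ∧ Multiset.card (g.roots.filter fun z => 0 < z) ≤ 2 := by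
  constructor
  · -- sign changes part
    by_cases ha : -(κ₁ - lam * κ₃) = 0
    · have hnd : g.natDegree ≤ 2 := by
        rw [hg, ha]
        simp only [map_zero, zero_mul, zero_add]
        compute_degree
      exact le_trans (signChanges_le_natDegree g) hnd
    · have hnd : g.natDegree = 3 := by rw [hg]; compute_degree <;> simp_all
      have e0 : g.coeff 0 = c₁ * κ₂ := by
        rw [hg]; simp only [coeff_add, coeff_C_mul, coeff_X_pow, coeff_C, coeff_X]; norm_num
      have e1 : g.coeff 1 = κ₂ - c₁ ^ 2 * κ₁ := by
        rw [hg]; simp only [coeff_add, coeff_C_mul, coeff_X_pow, coeff_C, coeff_X]; norm_num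
      have e2 : g.coeff 2 = -(2 * c₁ * κ₁) := by
        rw [hg]; simp only [coeff_add, coeff_C_mul, coeff_X_pow, coeff_C, coeff_X]; norm_num
      have e3 : g.coeff 3 = lam * κ₃ - κ₁ := by
        rw [hg]; simp only [coeff_add, coeff_C_mul, coeff_X_pow, coeff_C, coeff_X]; norm_num
      by_cases hc1 : c₁ = 0
      · have hcl : _root_.coeffList g = [0, κ₂, 0, lam * κ₃ - κ₁] := by
          rw [_root_.coeffList, hnd]
          simp [List.range_succ, e0, e1, e2, e3, hc1]
        have ha' : lam * κ₃ - κ₁ ≠ 0 := fun h => ha (by linarith)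
        rw [signChanges, hcl]
        simp only [List.filter, hκ₂.ne', ha', decide_not]
        simp
        split_ifs <;> omega
      · have hcl : _root_.coeffList g = [c₁ * κ₂, κ₂ - c₁ ^ 2 * κ₁, -(2 * c₁ * κ₁), lam * κ₃ - κ₁] := by
          rw [_root_.coeffList, hnd]
          simp [List.range_succ, e0, e1, e2, e3]
        rw [signChanges, hcl]
        have hsq : 0 < c₁ ^ 2 := lt_of_le_of_ne (sq_nonneg c₁) (Ne.symm (pow_ne_zero 2 hc1))
        have hdb : (c₁ * κ₂) * (-(2 * c₁ * κ₁)) < 0 := by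
          nlinarith [mul_pos (mul_pos hsq hκ₁) hκ₂]
        exact four_case _ _ _ _ hdb
  · -- roots part
    by_contra hlt
    push_neg at hlt
    have hg0 : g ≠ 0 := by
      intro h0
      rw [h0] at hlt
      simp at hlt
    have hdeg3 : g.natDegree ≤ 3 := by rw [hg]; compute_degree
    have hcr : Multiset.card g.roots ≤ 3 := le_trans (Polynomial.card_roots' g) hdeg3
    have hcf : Multiset.card (g.roots.filter fun z => 0 < z) ≤ Multiset.card g.roots :=
      Multiset.card_le_card (Multiset.filter_le _ _)
    have hcr3 : Multiset.card g.roots = 3 := le_antisymm hcr (le_trans hlt hcf)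
    have hfe : (g.roots.filter fun z => 0 < z) = g.roots :=
      Multiset.eq_of_le_of_card_le (Multiset.filter_le _ _) (by omega)
    have hnd3 : g.natDegree = 3 := le_antisymm hdeg3 (hcr3 ▸ Polynomial.card_roots' g)
    have hsplit : Splits g :=
      (Polynomial.splits_iff_card_roots).mpr (by rw [hcr3, hnd3])
    have hprod := (C_leadingCoeff_mul_prod_multiset_X_sub_C (Polynomial.splits_iff_card_roots.mp hsplit)).symm
    obtain ⟨r, s, t, hrst⟩ := Multiset.card_eq_three.mp hcr3
    have hpos : ∀ z ∈ g.roots, 0 < z := by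
      intro z hz
      rw [← hfe] at hz
      exact (Multiset.mem_filter.mp hz).2
    have hr : 0 < r := hpos r (by rw [hrst]; simp)
    have hs : 0 < s := hpos s (by rw [hrst]; simp)
    have ht : 0 < t := hpos t (by rw [hrst]; simp)
    rw [hrst] at hprod
    set a' := g.leadingCoeff with ha'
    have ha0 : a' ≠ 0 := Polynomial.leadingCoeff_ne_zero.mpr hg0
    have hx : ∀ x : ℝ, -(κ₁ - lam * κ₃) * x ^ 3 + -(2 * c₁ * κ₁) * x ^ 2
        + -(c₁ ^ 2 * κ₁ - κ₂) * x + c₁ * κ₂ = a' * ((x - r) * ((x - s) * (x - t))) := by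
      intro x
      have heq : C (-(κ₁ - lam * κ₃)) * X ^ 3 + C (-(2 * c₁ * κ₁)) * X ^ 2
          + C (-(c₁ ^ 2 * κ₁ - κ₂)) * X + C (c₁ * κ₂)
          = C a' * (Multiset.map (fun a => X - C a) ({r, s, t} : Multiset ℝ)).prod := hg ▸ hprod
      have := congrArg (Polynomial.eval x) heq
      simpa [Multiset.insert_eq_cons, mul_assoc] using this
    have hb : 2 * c₁ * κ₁ = a' * (r + s + t) := by
      linear_combination - (hx 1) / 2 - (hx (-1)) / 2 + hx 0
    have hd : c₁ * κ₂ = -(a' * (r * s * t)) := by linear_combination hx 0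
    have ha2 : 0 < a' ^ 2 := lt_of_le_of_ne (sq_nonneg a') (Ne.symm (pow_ne_zero 2 ha0))
    have key : 2 * (c₁ ^ 2 * (κ₁ * κ₂)) = -(a' ^ 2 * ((r + s + t) * (r * s * t))) := by
      linear_combination (c₁ * κ₂) * hb + (a' * (r + s + t)) * hd
    have hpos1 : 0 < a' ^ 2 * ((r + s + t) * (r * s * t)) :=
      mul_pos ha2 (mul_pos (by linarith) (mul_pos (mul_pos hr hs) ht))
    have hnn : 0 ≤ c₁ ^ 2 * (κ₁ * κ₂) := mul_nonneg (sq_nonneg c₁) (le_of_lt (mul_pos hκ₁ hκ₂))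
    linarith
end
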